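/- Let g be a real Lie algebra with a positive definite inner product ⟨,⟩ whose Levi-Civita product (defined by 2⟨u.v, w⟩ = ⟨[u,v],w⟩ + ⟨[w,v],u⟩ + ⟨[w,u],v⟩) is quasi-canonical. Then ⟨,⟩ is bi-invariant (each ad_u is skew-symmetric) and the Levi-Civita product equals u.v = (1/2)[u,v]. -/

import Mathlib

/-- A product `α` on a Lie algebra is Lie-admissible if `α(u,v) - α(v,u) = ⁅u,v⁆`. -/
def LieAdmissible {K L : Type*} [Field K] [LieRing L] [LieAlgebra K L]
    (α : L →ₗ[K] L →ₗ[K] L) : Prop :=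
  ∀ u v : L, α u v - α v u = ⁅u, v⁆

/-- A product `α` on a Lie algebra is bi-invariant if every `ad_u` is a derivation of it. -/
def BiInvariant {K L : Type*} [Field K] [LieRing L] [LieAlgebra K L]
    (α : L →ₗ[K] L →ₗ[K] L) : Prop :=
  ∀ u v w : L, ⁅u, α v w⁆ = α ⁅u, v⁆ w + α v ⁅u, w⁆

/-- A quasi-canonical product: Lie-admissible, bi-invariant, with curvature
`K^α(u,v) = [L_u, L_v] - L_{[u,v]}` equal to `-(1/4) ad_{[u,v]}`. -/
def QuasiCanonical {K L : Type*} [Field K] [LieRing L] [LieAlgebra K L]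
    (α : L →ₗ[K] L →ₗ[K] L) : Prop :=
  LieAdmissible α ∧ BiInvariant α ∧
    ∀ u v w : L, α u (α v w) - α v (α u w) - α ⁅u, v⁆ w = -((4 : K)⁻¹ • ⁅⁅u, v⁆, w⁆)

/-- on a real Lie algebra with a positive definite inner product whose
Levi-Civita product is quasi-canonical, the inner product is bi-invariant (each `ad_u`
is skew-symmetric) and the Levi-Civita product is `u·v = (1/2)⁅u,v⁆`. -/
theorem stmt19 {L : Type*} [LieRing L] [LieAlgebra ℝ L] [FiniteDimensional ℝ L]
    (B : L →ₗ[ℝ] L →ₗ[ℝ] ℝ)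
    (hsymm : ∀ u v : L, B u v = B v u)
    (hpos : ∀ u : L, u ≠ 0 → 0 < B u u)
    (p : L →ₗ[ℝ] L →ₗ[ℝ] L)
    (hkoszul : ∀ u v w : L,
      2 * B (p u v) w = B ⁅u, v⁆ w + B ⁅w, v⁆ u + B ⁅w, u⁆ v)
    (hqc : QuasiCanonical p) :
    (∀ u v w : L, B ⁅u, v⁆ w = -B v ⁅u, w⁆) ∧
      ∀ u v : L, p u v = (2 : ℝ)⁻¹ • ⁅u, v⁆ := by
  obtain ⟨-, -, hcurv⟩ := hqc
  -- an element paired to zero with everything is zero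
  have hzero : ∀ t : L, (∀ w : L, B t w = 0) → t = 0 := by
    intro t ht
    by_contra h
    have h1 := hpos t h
    have h2 := ht t
    linarith
  -- B of opposite brackets
  have hbsk : ∀ a b c : L, B ⁅a, b⁆ c = - B ⁅b, a⁆ c := by
    intro a b c
    rw [show (⁅a, b⁆ : L) = -⁅b, a⁆ from (lie_skew a b).symm, map_neg, LinearMap.neg_apply]
  -- skew-symmetry of left multiplication by p
  have hskew : ∀ u v w : L, B (p u v) w = - B v (p u w) := by
    intro u v w
    have h1 := hkoszul u v w
    have h2 := hkoszul u w v
    have e1 := hbsk u v w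
    have e2 := hbsk w v u
    have e3 := hbsk w u v
    have e4 : B v (p u w) = B (p u w) v := hsymm v (p u w)
    have e5 : B ⁅v, w⁆ u = - B ⁅w, v⁆ u := hbsk v w u
    linarith
  -- ad of a bracket is B-skew
  have hA : ∀ u v w x : L, B ⁅⁅u, v⁆, w⁆ x = - B w ⁅⁅u, v⁆, x⁆ := by
    intro u v w x
    have c1 := congrArg (fun t => B t x) (hcurv u v w)
    have c2 := congrArg (fun t => B w t) (hcurv u v x)
    simp only [map_sub, map_neg, map_smul, LinearMap.sub_apply, LinearMap.neg_apply,
      LinearMap.smul_apply, smul_eq_mul] at c1 c2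
    have t1 : B (p u (p v w)) x = B w (p v (p u x)) := by
      have a1 := hskew u (p v w) x
      have a2 := hsymm (p v w) (p u x)
      have a3 := hskew v w (p u x)
      linarith
    have t2 : B (p v (p u w)) x = B w (p u (p v x)) := by
      have a1 := hskew v (p u w) x
      have a2 := hsymm (p u w) (p v x)
      have a3 := hskew u w (p v x)
      linarith
    have t3 : B (p ⁅u, v⁆ w) x = - B w (p ⁅u, v⁆ x) := by
      have a1 := hskew ⁅u, v⁆ w x
      have a2 := hsymm w (p ⁅u, v⁆ x)
      linarith
    linarith
  -- the predicate "orthogonal to all brackets"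
  have hMbr : ∀ a : L, (∀ b c : L, B a ⁅b, c⁆ = 0) → ∀ u v : L, ⁅⁅u, v⁆, a⁆ = 0 := by
    intro a ha u v
    apply hzero
    intro x
    rw [hA u v a x, ha ⁅u, v⁆ x, neg_zero]
  -- p on M × M is half the bracket
  have hpm : ∀ a b : L, (∀ b' c' : L, B a ⁅b', c'⁆ = 0) → (∀ b' c' : L, B b ⁅b', c'⁆ = 0) →
      p a b = (2 : ℝ)⁻¹ • ⁅a, b⁆ := by
    intro a b ha hb
    have : p a b - (2 : ℝ)⁻¹ • ⁅a, b⁆ = 0 := by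
      apply hzero
      intro w
      have h1 := hkoszul a b w
      have e1 : B ⁅w, b⁆ a = 0 := by rw [hsymm]; exact ha w b
      have e2 : B ⁅w, a⁆ b = 0 := by rw [hsymm]; exact hb w a
      rw [map_sub, map_smul, LinearMap.sub_apply, LinearMap.smul_apply, smul_eq_mul]
      linarith
    exact sub_eq_zero.mp this
  -- elements of M commute with each other
  have hcomm : ∀ a b : L, (∀ b' c' : L, B a ⁅b', c'⁆ = 0) → (∀ b' c' : L, B b ⁅b', c'⁆ = 0) →
      ⁅a, b⁆ = 0 := by
    intro u v hu hv
    have hc := hcurv u v u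
    have hz : (⁅⁅u, v⁆, u⁆ : L) = 0 := hMbr u hu u v
    rw [hz, smul_zero, neg_zero] at hc
    have hc' := congrArg (fun t => B t v) hc
    simp only [map_sub, LinearMap.sub_apply, map_zero, LinearMap.zero_apply] at hc'
    -- first term
    have hpvu : p v u = (2 : ℝ)⁻¹ • ⁅v, u⁆ := hpm v u hv hu
    have hpuv : p u v = (2 : ℝ)⁻¹ • ⁅u, v⁆ := hpm u v hu hv
    have hpuu : p u u = 0 := by
      have := hpm u u hu hu
      rw [lie_self, smul_zero] at this
      exact this
    have t1 : B (p u (p v u)) v = (4 : ℝ)⁻¹ * B ⁅u, v⁆ ⁅u, v⁆ := by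
      have a1 := hskew u (p v u) v
      have a2 : B (p v u) (p u v) = (4 : ℝ)⁻¹ * B ⁅v, u⁆ ⁅u, v⁆ := by
        rw [hpvu, hpuv]
        simp only [map_smul, LinearMap.smul_apply, smul_eq_mul]
        ring
      have a3 : B ⁅v, u⁆ ⁅u, v⁆ = - B ⁅u, v⁆ ⁅u, v⁆ := hbsk v u ⁅u, v⁆
      rw [a1, a2, a3]
      ring
    have t2 : B (p v (p u u)) v = 0 := by
      simp [hpuu]
    have t3 : 2 * B (p ⁅u, v⁆ u) v = - B ⁅u, v⁆ ⁅u, v⁆ := by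
      have h1 := hkoszul ⁅u, v⁆ u v
      have e1 : (⁅⁅u, v⁆, u⁆ : L) = 0 := hz
      have e2 : (⁅v, ⁅u, v⁆⁆ : L) = 0 := by
        rw [show (⁅v, ⁅u, v⁆⁆ : L) = -⁅⁅u, v⁆, v⁆ from (lie_skew v ⁅u, v⁆).symm,
          hMbr v hv u v, neg_zero]
      rw [e1, e2] at h1
      have e3 : B (0 : L) v = 0 := by rw [map_zero, LinearMap.zero_apply]
      have e4 : B (0 : L) u = 0 := by rw [map_zero, LinearMap.zero_apply]
      have e5 : B ⁅v, u⁆ ⁅u, v⁆ = - B ⁅u, v⁆ ⁅u, v⁆ := hbsk v u ⁅u, v⁆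
      linarith
    have key : B ⁅u, v⁆ ⁅u, v⁆ = 0 := by linarith
    by_contra h
    have := hpos ⁅u, v⁆ h
    linarith
  -- the span of all brackets
  set H : Submodule ℝ L := Submodule.span ℝ {x : L | ∃ a b : L, x = ⁅a, b⁆} with hH
  have hbrH : ∀ a b : L, (⁅a, b⁆ : L) ∈ H := fun a b =>
    Submodule.subset_span ⟨a, b, rfl⟩
  -- membership in the B-orthogonal of H gives the M predicate
  have horthM : ∀ a : L, a ∈ LinearMap.BilinForm.orthogonal B H → ∀ b c : L, B a ⁅b, c⁆ = 0 := by
    intro a ha b c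
    rw [hsymm]
    exact (LinearMap.BilinForm.mem_orthogonal_iff.mp ha) ⁅b, c⁆ (hbrH b c)
  -- elements of H act skew-symmetrically and kill M
  have hHskew : ∀ x ∈ H, ∀ v w : L, B ⁅x, v⁆ w = - B v ⁅x, w⁆ := by
    intro x hx
    induction hx using Submodule.span_induction with
    | mem y hy =>
      obtain ⟨a, b, rfl⟩ := hy
      exact fun v w => hA a b v w
    | zero => intro v w; simp
    | add y z _ _ hy hz =>
      intro v w
      rw [add_lie, add_lie, map_add, LinearMap.add_apply, map_add, hy v w, hz v w]
      ring
    | smul c y _ hy =>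
      intro v w
      rw [smul_lie, smul_lie, map_smul, LinearMap.smul_apply, map_smul, hy v w,
        smul_eq_mul, smul_eq_mul]
      ring
  have hHM : ∀ x ∈ H, ∀ a : L, (∀ b c : L, B a ⁅b, c⁆ = 0) → ⁅x, a⁆ = 0 := by
    intro x hx
    induction hx using Submodule.span_induction with
    | mem y hy =>
      obtain ⟨a, b, rfl⟩ := hy
      exact fun a' ha' => hMbr a' ha' a b
    | zero => intro a ha; simp
    | add y z _ _ hy hz =>
      intro a ha
      rw [add_lie, hy a ha, hz a ha, add_zero]
    | smul c y _ hy =>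
      intro a ha
      rw [smul_lie, hy a ha, smul_zero]
  -- decomposition L = H ⊕ H^⊥
  have hrefl : B.IsRefl := fun x y h => by rw [hsymm]; exact h
  have hnd : (LinearMap.BilinForm.restrict B H).Nondegenerate := by
    refine (LinearMap.IsRefl.nondegenerate_iff_separatingLeft
      (B := LinearMap.BilinForm.restrict B H) (hrefl.domRestrict H)).mpr ?_
    intro x hx
    have : B (x : L) (x : L) = 0 := by simpa using hx x
    by_contra h
    have hx0 : (x : L) ≠ 0 := fun h0 => h (Subtype.ext h0)
    have := hpos (x : L) hx0
    linarith
  have hcompl : IsCompl H (LinearMap.BilinForm.orthogonal B H) :=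
    LinearMap.BilinForm.isCompl_orthogonal_of_restrict_nondegenerate hrefl hnd
  have hdecomp : ∀ u : L, ∃ x a : L, x ∈ H ∧ (∀ b c : L, B a ⁅b, c⁆ = 0) ∧ u = x + a := by
    intro u
    have : u ∈ H ⊔ LinearMap.BilinForm.orthogonal B H := by
      rw [hcompl.sup_eq_top]; trivial
    obtain ⟨x, hx, a, ha, hxa⟩ := Submodule.mem_sup.mp this
    exact ⟨x, a, hx, horthM a ha, hxa.symm⟩
  -- any element of M is central
  have hMcentral : ∀ a : L, (∀ b c : L, B a ⁅b, c⁆ = 0) → ∀ v : L, ⁅a, v⁆ = 0 := by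
    intro a ha v
    obtain ⟨y, b, hy, hb, rfl⟩ := hdecomp v
    rw [lie_add]
    have e1 : (⁅a, y⁆ : L) = 0 := by
      rw [show (⁅a, y⁆ : L) = -⁅y, a⁆ from (lie_skew a y).symm, hHM y hy a ha, neg_zero]
    have e2 : (⁅a, b⁆ : L) = 0 := hcomm a b ha hb
    rw [e1, e2, add_zero]
  -- first conclusion: B is bi-invariant
  have hbi : ∀ u v w : L, B ⁅u, v⁆ w = - B v ⁅u, w⁆ := by
    intro u v w
    obtain ⟨x, a, hx, ha, rfl⟩ := hdecomp u
    have e1 : (⁅x + a, v⁆ : L) = ⁅x, v⁆ := by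
      rw [add_lie, hMcentral a ha v, add_zero]
    have e2 : (⁅x + a, w⁆ : L) = ⁅x, w⁆ := by
      rw [add_lie, hMcentral a ha w, add_zero]
    rw [e1, e2]
    exact hHskew x hx v w
  refine ⟨hbi, ?_⟩
  intro u v
  have : p u v - (2 : ℝ)⁻¹ • ⁅u, v⁆ = 0 := by
    apply hzero
    intro w
    have h1 := hkoszul u v w
    have e1 : B ⁅w, v⁆ u = - B v ⁅w, u⁆ := hbi w v u
    have e2 : B v ⁅w, u⁆ = B ⁅w, u⁆ v := hsymm v ⁅w, u⁆
    rw [map_sub, map_smul, LinearMap.sub_apply, LinearMap.smul_apply, smul_eq_mul]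
    linarith
  exact sub_eq_zero.mp this
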